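/- Let H be a Hadamard matrix of order M (entries in {−1,1}, Hᵀ H = M·I). Let B₁, …, B_D be M×N matrices with entries in {0,1}, each column of each Bᵢ containing exactly one entry equal to 1, and suppose B = Σᵢ₌₁^D Bᵢ has all entries in {0,1}. Let A be a real number and K a natural number, and assume that for every set S of column indices with |S| ≤ K, #{ j : ∃ ℓ ∈ S, B_{j,ℓ} = 1 } ≥ A·|S|. Then for every ternary vector v ∈ ℝᴺ with ‖v‖₀ ≤ K, Σᵢ₌₁^D ‖(H·Bᵢ)·v‖₂² ≥ M·(2A − D)·‖v‖₀. -/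

import Mathlib

open Matrix Finset

private lemma had_norm {M : ℕ} (H : Matrix (Fin M) (Fin M) ℝ)
    (hH : Hᵀ * H = (M : ℝ) • 1) (w : Fin M → ℝ) :
    ∑ j, (H.mulVec w j) ^ 2 = M * ∑ j, (w j) ^ 2 := by
  have h1 : ∑ j, (H.mulVec w j) ^ 2 = H.mulVec w ⬝ᵥ H.mulVec w := by
    simp [dotProduct, sq]
  rw [h1, dotProduct_mulVec, ← Matrix.mulVec_transpose, Matrix.mulVec_mulVec, hH]
  simp [Matrix.smul_mulVec, Matrix.one_mulVec, dotProduct, sq, Finset.mul_sum,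
    mul_assoc]

open Classical in
/-- Key ℓ₂ lower bound for the expander-based pooling matrix: with `H` a
Hadamard matrix of order `M` and `B = Σᵢ Bᵢ` the biadjacency matrix of a left-`D`-regular
`(N,M,D,K,A)`-expander decomposed into one-edge-per-column blocks, every ternary `v` with
`‖v‖₀ ≤ K` satisfies `Σᵢ ‖(H·Bᵢ)v‖₂² ≥ M·(2A − D)·‖v‖₀`. -/
theorem stmt_7 {M N D : ℕ} (H : Matrix (Fin M) (Fin M) ℝ)
    (hHentries : ∀ i j, H i j = -1 ∨ H i j = 1)
    (hH : Hᵀ * H = (M : ℝ) • 1)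
    (B : Fin D → Matrix (Fin M) (Fin N) ℝ)
    (hBentries : ∀ i j ℓ, B i j ℓ = 0 ∨ B i j ℓ = 1)
    (hcol : ∀ i ℓ, (univ.filter fun j => B i j ℓ = 1).card = 1)
    (hsum : ∀ j ℓ, (∑ i, B i) j ℓ = 0 ∨ (∑ i, B i) j ℓ = 1)
    (A : ℝ) (K : ℕ)
    (hexp : ∀ S : Finset (Fin N), S.card ≤ K →
      A * S.card ≤ ((univ.filter fun j => ∃ ℓ ∈ S, (∑ i, B i) j ℓ = 1).card : ℝ))
    (v : Fin N → ℝ) (hv : ∀ ℓ, v ℓ = -1 ∨ v ℓ = 0 ∨ v ℓ = 1)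
    (hsupp : (univ.filter fun ℓ => v ℓ ≠ 0).card ≤ K) :
    (M : ℝ) * (2 * A - D) * (univ.filter fun ℓ => v ℓ ≠ 0).card ≤
      ∑ i, ∑ j, ((H * B i).mulVec v j) ^ 2 := by
  classical
  set S : Finset (Fin N) := univ.filter fun ℓ => v ℓ ≠ 0 with hSdef
  set Γ : Finset (Fin M) := univ.filter fun j => ∃ ℓ ∈ S, (∑ i, B i) j ℓ = 1 with hΓdef
  -- basic facts
  have hvS : ∀ ℓ, ℓ ∉ S → v ℓ = 0 := by
    intro ℓ h
    by_contra h'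
    exact h (by simp [hSdef, h'])
  have hvsq : ∀ ℓ ∈ S, (v ℓ) ^ 2 = 1 := by
    intro ℓ hℓ
    have : v ℓ ≠ 0 := by simpa [hSdef] using hℓ
    rcases hv ℓ with h | h | h <;> simp [h] at this ⊢
  -- mulVec restricted to the support
  have hmv : ∀ i j, (B i).mulVec v j = ∑ ℓ ∈ S, B i j ℓ * v ℓ := by
    intro i j
    have : (B i).mulVec v j = ∑ ℓ, B i j ℓ * v ℓ := by
      simp [Matrix.mulVec, dotProduct]
    rw [this]
    refine (Finset.sum_subset (Finset.subset_univ S) ?_).symm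
    intro ℓ _ hℓ
    simp [hvS ℓ hℓ]
  -- the edge multiset between S and row j
  set E : Fin M → Finset (Fin D × Fin N) :=
    fun j => (univ ×ˢ S).filter fun p => B p.1 j p.2 = 1 with hEdef
  have hsumEntry : ∀ j ℓ, (∑ i, B i) j ℓ = ∑ i, B i j ℓ := by
    intro j ℓ; simp [Matrix.sum_apply]
  -- the degree identity: ∑_i ∑_{ℓ∈S} B i j ℓ = (E j).card
  have hd : ∀ j, ∑ i, ∑ ℓ ∈ S, B i j ℓ = ((E j).card : ℝ) := by
    intro j
    rw [← Finset.sum_product']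
    have : ∀ p ∈ univ ×ˢ S, B p.1 j p.2 = if B p.1 j p.2 = 1 then (1 : ℝ) else 0 := by
      intro p _
      rcases hBentries p.1 j p.2 with h | h <;> simp [h]
    rw [Finset.sum_congr rfl this, Finset.sum_boole, hEdef]
  -- total edge count: ∑ j (E j).card = D * S.card
  have htot : ∑ j, ((E j).card : ℝ) = (D : ℝ) * S.card := by
    have hcolsum : ∀ i ℓ, ∑ j, B i j ℓ = 1 := by
      intro i ℓ
      have : ∀ j ∈ (univ : Finset (Fin M)), B i j ℓ = if B i j ℓ = 1 then (1 : ℝ) else 0 := by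
        intro j _
        rcases hBentries i j ℓ with h | h <;> simp [h]
      rw [Finset.sum_congr rfl this, Finset.sum_boole, hcol i ℓ]
      norm_num
    calc ∑ j, ((E j).card : ℝ) = ∑ j, ∑ i, ∑ ℓ ∈ S, B i j ℓ := by
          refine Finset.sum_congr rfl fun j _ => (hd j).symm
      _ = ∑ i, ∑ ℓ ∈ S, ∑ j, B i j ℓ := by
          rw [Finset.sum_comm]
          refine Finset.sum_congr rfl fun i _ => Finset.sum_comm
      _ = ∑ i : Fin D, ∑ ℓ ∈ S, (1 : ℝ) := by
          refine Finset.sum_congr rfl fun i _ => Finset.sum_congr rfl fun ℓ _ => hcolsum i ℓ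
      _ = (D : ℝ) * S.card := by simp [mul_comm]
  -- pointwise key inequality
  have hpt : ∀ j, (if j ∈ Γ then (2 : ℝ) else 0) - ((E j).card : ℝ) ≤
      ∑ i, ((B i).mulVec v j) ^ 2 := by
    intro j
    have hsqnn : (0 : ℝ) ≤ ∑ i, ((B i).mulVec v j) ^ 2 :=
      Finset.sum_nonneg fun i _ => sq_nonneg _
    by_cases hjΓ : j ∈ Γ
    · simp only [hjΓ, if_pos]
      -- there is an edge (i₀, ℓ₀)
      obtain ⟨ℓ₀, hℓ₀S, hℓ₀⟩ : ∃ ℓ ∈ S, (∑ i, B i) j ℓ = 1 := by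
        simpa [hΓdef] using hjΓ
      rw [hsumEntry] at hℓ₀
      obtain ⟨i₀, hi₀⟩ : ∃ i, B i j ℓ₀ = 1 := by
        by_contra hno
        push_neg at hno
        have : ∀ i ∈ (univ : Finset (Fin D)), B i j ℓ₀ = 0 := by
          intro i _
          rcases hBentries i j ℓ₀ with h | h
          · exact h
          · exact absurd h (hno i)
        rw [Finset.sum_congr rfl this] at hℓ₀
        simp at hℓ₀
      have hmem : (i₀, ℓ₀) ∈ E j := by
        simp [hEdef, hℓ₀S, hi₀]
      have hcard1 : 1 ≤ (E j).card := Finset.card_pos.mpr ⟨_, hmem⟩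
      by_cases h2 : 2 ≤ (E j).card
      · have : (2 : ℝ) - ((E j).card : ℝ) ≤ 0 := by
          have : (2 : ℝ) ≤ ((E j).card : ℝ) := by exact_mod_cast h2
          linarith
        linarith
      · -- exactly one edge
        have hcard : (E j).card = 1 := by omega
        have hsing : E j = {(i₀, ℓ₀)} := by
          obtain ⟨a, ha⟩ := Finset.card_eq_one.mp hcard
          rw [ha] at hmem ⊢
          simp at hmem
          rw [hmem]
        have hzero : ∀ i ℓ, ℓ ∈ S → (i, ℓ) ≠ (i₀, ℓ₀) → B i j ℓ = 0 := by
          intro i ℓ hℓ hne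
          rcases hBentries i j ℓ with h | h
          · exact h
          · exfalso
            have : (i, ℓ) ∈ E j := by simp [hEdef, hℓ, h]
            rw [hsing] at this
            simp at this
            exact hne (by simp [this])
        have hval : (B i₀).mulVec v j = v ℓ₀ := by
          rw [hmv]
          rw [Finset.sum_eq_single_of_mem ℓ₀ hℓ₀S]
          · rw [hi₀, one_mul]
          · intro ℓ hℓ hne
            rw [hzero i₀ ℓ hℓ (by simp [hne]), zero_mul]
        have hle : (v ℓ₀) ^ 2 ≤ ∑ i, ((B i).mulVec v j) ^ 2 := by
          rw [← hval]
          exact Finset.single_le_sum (fun i _ => sq_nonneg ((B i).mulVec v j))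
            (Finset.mem_univ i₀)
        rw [hvsq ℓ₀ hℓ₀S] at hle
        rw [hcard]
        norm_num
        linarith
    · simp only [hjΓ, if_neg, not_false_iff]
      have : (0 : ℝ) ≤ ((E j).card : ℝ) := by positivity
      linarith
  -- summing the pointwise inequality
  have hcore : 2 * (Γ.card : ℝ) - (D : ℝ) * S.card ≤
      ∑ i, ∑ j, ((B i).mulVec v j) ^ 2 := by
    have h1 : ∑ j, ((if j ∈ Γ then (2 : ℝ) else 0) - ((E j).card : ℝ)) ≤
        ∑ j, ∑ i, ((B i).mulVec v j) ^ 2 :=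
      Finset.sum_le_sum fun j _ => hpt j
    have h2 : ∑ j, (if j ∈ Γ then (2 : ℝ) else 0) = 2 * (Γ.card : ℝ) := by
      rw [Finset.sum_ite_mem]
      simp [Finset.univ_inter, mul_comm]
    rw [Finset.sum_sub_distrib, h2, htot] at h1
    rw [Finset.sum_comm]
    exact h1
  -- expansion bound
  have hexpS : A * S.card ≤ (Γ.card : ℝ) := hexp S hsupp
  -- Hadamard step
  have hstep : ∀ i, ∑ j, ((H * B i).mulVec v j) ^ 2 = M * ∑ j, ((B i).mulVec v j) ^ 2 := by
    intro i
    rw [← Matrix.mulVec_mulVec]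
    exact had_norm H hH _
  calc (M : ℝ) * (2 * A - D) * S.card
      = (M : ℝ) * ((2 * A - D) * S.card) := by ring
    _ ≤ (M : ℝ) * ∑ i, ∑ j, ((B i).mulVec v j) ^ 2 := by
        refine mul_le_mul_of_nonneg_left ?_ (by positivity)
        have : (2 * A - (D : ℝ)) * S.card = 2 * (A * S.card) - (D : ℝ) * S.card := by ring
        rw [this]
        calc 2 * (A * S.card) - (D : ℝ) * S.card
            ≤ 2 * (Γ.card : ℝ) - (D : ℝ) * S.card := by linarith
          _ ≤ _ := hcore
    _ = ∑ i, ∑ j, ((H * B i).mulVec v j) ^ 2 := by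
        rw [Finset.mul_sum]
        exact (Finset.sum_congr rfl fun i _ => hstep i).symm
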